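/- Algebraic Carnap categoricity of IPC: Let A be an algebra with constants 0, 1 and binary operations ∧, ∨, → such that the relation a ≤ b ⟺ a ∧ b = a is a partial order with greatest element 1. Suppose that whenever ψ₁,…,ψₙ ⊢_IPC φ, then for all valuations v : Prop → A and all c ∈ A, if c ≤ ⟦ψᵢ⟧ᵥ for all i then c ≤ ⟦φ⟧ᵥ (where ⟦·⟧ᵥ is the unique homomorphic extension of v, and for n = 0 the conclusion is ⟦φ⟧ᵥ = 1). Then A is a Heyting algebra with these operations. -/
import Mathlib


/-- Formulas in the language with ⊥, ⊤, ∧, ∨, → over atoms ℕ. -/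
inductive Form : Type where
  | atom : ℕ → Form
  | bot  : Form
  | top  : Form
  | and  : Form → Form → Form
  | or   : Form → Form → Form
  | imp  : Form → Form → Form

/-- Intuitionistic propositional consequence (natural deduction). -/
inductive IPC : Set Form → Form → Prop where
  | ax    {Γ : Set Form} {φ : Form} : φ ∈ Γ → IPC Γ φ
  | topI  {Γ : Set Form} : IPC Γ Form.top
  | botE  {Γ : Set Form} {φ : Form} : IPC Γ Form.bot → IPC Γ φ
  | andI  {Γ : Set Form} {φ ψ : Form} : IPC Γ φ → IPC Γ ψ → IPC Γ (Form.and φ ψ)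
  | andE1 {Γ : Set Form} {φ ψ : Form} : IPC Γ (Form.and φ ψ) → IPC Γ φ
  | andE2 {Γ : Set Form} {φ ψ : Form} : IPC Γ (Form.and φ ψ) → IPC Γ ψ
  | orI1  {Γ : Set Form} {φ ψ : Form} : IPC Γ φ → IPC Γ (Form.or φ ψ)
  | orI2  {Γ : Set Form} {φ ψ : Form} : IPC Γ ψ → IPC Γ (Form.or φ ψ)
  | orE   {Γ : Set Form} {φ ψ χ : Form} : IPC Γ (Form.or φ ψ) →
      IPC (insert φ Γ) χ → IPC (insert ψ Γ) χ → IPC Γ χ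
  | impI  {Γ : Set Form} {φ ψ : Form} : IPC (insert φ Γ) ψ → IPC Γ (Form.imp φ ψ)
  | impE  {Γ : Set Form} {φ ψ : Form} : IPC Γ (Form.imp φ ψ) → IPC Γ φ → IPC Γ ψ

/-- The unique homomorphic extension of a valuation v : atoms → A. -/
def evalA {A : Type*} (z o : A) (meet join himp : A → A → A) (v : ℕ → A) :
    Form → A
  | Form.atom p => v p
  | Form.bot => z
  | Form.top => o
  | Form.and φ ψ => meet (evalA z o meet join himp v φ) (evalA z o meet join himp v ψ)
  | Form.or φ ψ => join (evalA z o meet join himp v φ) (evalA z o meet join himp v ψ)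
  | Form.imp φ ψ => himp (evalA z o meet join himp v φ) (evalA z o meet join himp v ψ)

namespace CarnapAux

variable {φ ψ χ : Form}

lemma ax1 {Γ : Set Form} : IPC (insert φ Γ) φ :=
  IPC.ax (Set.mem_insert _ _)

lemma ax2 {Γ : Set Form} (h : φ ∈ Γ) : IPC (insert ψ Γ) φ :=
  IPC.ax (Set.mem_insert_of_mem _ h)

lemma axh : IPC {ρ | ρ ∈ [φ]} φ :=
  IPC.ax (List.mem_singleton.mpr rfl)

lemma memh : φ ∈ ({ρ | ρ ∈ [φ]} : Set Form) :=
  List.mem_singleton.mpr rfl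

lemma d_and_comm (φ ψ : Form) : IPC {ρ | ρ ∈ [Form.and φ ψ]} (Form.and ψ φ) :=
  IPC.andI (IPC.andE2 axh) (IPC.andE1 axh)

lemma d_and_assoc1 (φ ψ χ : Form) :
    IPC {ρ | ρ ∈ [Form.and φ (Form.and ψ χ)]} (Form.and (Form.and φ ψ) χ) :=
  IPC.andI (IPC.andI (IPC.andE1 axh) (IPC.andE1 (IPC.andE2 axh)))
    (IPC.andE2 (IPC.andE2 axh))

lemma d_and_assoc2 (φ ψ χ : Form) :
    IPC {ρ | ρ ∈ [Form.and (Form.and φ ψ) χ]} (Form.and φ (Form.and ψ χ)) :=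
  IPC.andI (IPC.andE1 (IPC.andE1 axh))
    (IPC.andI (IPC.andE2 (IPC.andE1 axh)) (IPC.andE2 axh))

lemma d_or_comm (φ ψ : Form) : IPC {ρ | ρ ∈ [Form.or φ ψ]} (Form.or ψ φ) :=
  IPC.orE axh (IPC.orI2 ax1) (IPC.orI1 ax1)

lemma d_or_assoc1 (φ ψ χ : Form) :
    IPC {ρ | ρ ∈ [Form.or φ (Form.or ψ χ)]} (Form.or (Form.or φ ψ) χ) :=
  IPC.orE axh (IPC.orI1 (IPC.orI1 ax1))
    (IPC.orE ax1 (IPC.orI1 (IPC.orI2 ax1)) (IPC.orI2 ax1))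

lemma d_or_assoc2 (φ ψ χ : Form) :
    IPC {ρ | ρ ∈ [Form.or (Form.or φ ψ) χ]} (Form.or φ (Form.or ψ χ)) :=
  IPC.orE axh
    (IPC.orE ax1 (IPC.orI1 ax1) (IPC.orI2 (IPC.orI1 ax1)))
    (IPC.orI2 (IPC.orI2 ax1))

lemma d_absorb1a (φ ψ : Form) : IPC {ρ | ρ ∈ [Form.and φ (Form.or φ ψ)]} φ :=
  IPC.andE1 axh

lemma d_absorb1b (φ ψ : Form) : IPC {ρ | ρ ∈ [φ]} (Form.and φ (Form.or φ ψ)) :=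
  IPC.andI axh (IPC.orI1 axh)

lemma d_absorb2a (φ ψ : Form) : IPC {ρ | ρ ∈ [Form.or φ (Form.and φ ψ)]} φ :=
  IPC.orE axh ax1 (IPC.andE1 ax1)

lemma d_absorb2b (φ ψ : Form) : IPC {ρ | ρ ∈ [φ]} (Form.or φ (Form.and φ ψ)) :=
  IPC.orI1 axh

lemma d_orbot1 (φ : Form) : IPC {ρ | ρ ∈ [Form.or φ Form.bot]} φ :=
  IPC.orE axh ax1 (IPC.botE ax1)

lemma d_orbot2 (φ : Form) : IPC {ρ | ρ ∈ [φ]} (Form.or φ Form.bot) :=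
  IPC.orI1 axh

lemma d_imprefl (φ : Form) : IPC {ρ | ρ ∈ ([] : List Form)} (Form.imp φ φ) :=
  IPC.impI ax1

lemma d_mp1 (φ ψ : Form) :
    IPC {ρ | ρ ∈ [Form.and φ (Form.imp φ ψ)]} (Form.and φ ψ) :=
  IPC.andI (IPC.andE1 axh) (IPC.impE (IPC.andE2 axh) (IPC.andE1 axh))

lemma d_mp2 (φ ψ : Form) :
    IPC {ρ | ρ ∈ [Form.and φ ψ]} (Form.and φ (Form.imp φ ψ)) :=
  IPC.andI (IPC.andE1 axh) (IPC.impI (IPC.andE2 (ax2 memh)))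

lemma d_le1 (φ ψ : Form) : IPC {ρ | ρ ∈ [Form.and (Form.imp φ ψ) ψ]} ψ :=
  IPC.andE2 axh

lemma d_le2 (φ ψ : Form) : IPC {ρ | ρ ∈ [ψ]} (Form.and (Form.imp φ ψ) ψ) :=
  IPC.andI (IPC.impI (ax2 memh)) axh

lemma d_dist1 (φ ψ χ : Form) : IPC {ρ | ρ ∈ [Form.imp φ (Form.and ψ χ)]}
    (Form.and (Form.imp φ ψ) (Form.imp φ χ)) :=
  IPC.andI (IPC.impI (IPC.andE1 (IPC.impE (ax2 memh) ax1)))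
    (IPC.impI (IPC.andE2 (IPC.impE (ax2 memh) ax1)))

lemma d_dist2 (φ ψ χ : Form) : IPC {ρ | ρ ∈ [Form.and (Form.imp φ ψ) (Form.imp φ χ)]}
    (Form.imp φ (Form.and ψ χ)) :=
  IPC.impI (IPC.andI (IPC.impE (IPC.andE1 (ax2 memh)) ax1)
    (IPC.impE (IPC.andE2 (ax2 memh)) ax1))

end CarnapAux

open CarnapAux

/-- Algebraic Carnap categoricity of IPC: an algebraic interpretation consistent
with ⊢_IPC is a Heyting algebra (with a ≤ b ⟺ a ∧ b = a). -/


theorem algebraic_carnap_IPC {A : Type*} (z o : A) (meet join himp : A → A → A)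
    -- a ≤ b ⟺ a ∧ b = a is a partial order with greatest element 1
    (hrefl : ∀ a : A, meet a a = a)
    (hantisymm : ∀ a b : A, meet a b = a → meet b a = b → a = b)
    (htrans : ∀ a b c : A, meet a b = a → meet b c = b → meet a c = a)
    (htop : ∀ a : A, meet a o = a)
    -- consistency with ⊢_IPC
    (hcons : ∀ (L : List Form) (φ : Form), IPC {ψ | ψ ∈ L} φ →
      ∀ (v : ℕ → A) (c : A),
        (∀ ψ ∈ L, meet c (evalA z o meet join himp v ψ) = c) →
        meet c (evalA z o meet join himp v φ) = c) :
    -- conclusion: (A, z, o, meet, join, himp) is a Heyting algebra, i.e.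
    -- a bounded lattice satisfying the defining equations of Heyting algebras
    (∀ a b : A, meet a b = meet b a) ∧
    (∀ a b c : A, meet a (meet b c) = meet (meet a b) c) ∧
    (∀ a b : A, join a b = join b a) ∧
    (∀ a b c : A, join a (join b c) = join (join a b) c) ∧
    (∀ a b : A, meet a (join a b) = a) ∧
    (∀ a b : A, join a (meet a b) = a) ∧
    (∀ a : A, meet a o = a) ∧
    (∀ a : A, join a z = a) ∧
    (∀ a : A, himp a a = o) ∧
    (∀ a b : A, meet a (himp a b) = meet a b) ∧
    (∀ a b : A, meet (himp a b) b = b) ∧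
    (∀ a b c : A, himp a (meet b c) = meet (himp a b) (himp a c)) := by

  have key : ∀ (φ ψ : Form) (v : ℕ → A),
      IPC {χ | χ ∈ [φ]} ψ → IPC {χ | χ ∈ [ψ]} φ →
      evalA z o meet join himp v φ = evalA z o meet join himp v ψ := by
    intro φ ψ v h1 h2
    have e1 := hcons [φ] ψ h1 v (evalA z o meet join himp v φ)
      (by intro χ hχ; simp at hχ; subst hχ; exact hrefl _)
    have e2 := hcons [ψ] φ h2 v (evalA z o meet join himp v ψ)
      (by intro χ hχ; simp at hχ; subst hχ; exact hrefl _)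
    exact hantisymm _ _ e1 e2
  refine ⟨?_, ?_, ?_, ?_, ?_, ?_, htop, ?_, ?_, ?_, ?_, ?_⟩
  · intro a b
    simpa [evalA] using key _ _ (fun n => if n = 0 then a else b) (d_and_comm (Form.atom 0) (Form.atom 1)) (d_and_comm (Form.atom 1) (Form.atom 0))
  · intro a b c
    simpa [evalA] using key _ _ (fun n => if n = 0 then a else if n = 1 then b else c)
      (d_and_assoc1 (Form.atom 0) (Form.atom 1) (Form.atom 2)) (d_and_assoc2 (Form.atom 0) (Form.atom 1) (Form.atom 2))
  · intro a b
    simpa [evalA] using key _ _ (fun n => if n = 0 then a else b) (d_or_comm (Form.atom 0) (Form.atom 1)) (d_or_comm (Form.atom 1) (Form.atom 0))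
  · intro a b c
    simpa [evalA] using key _ _ (fun n => if n = 0 then a else if n = 1 then b else c)
      (d_or_assoc1 (Form.atom 0) (Form.atom 1) (Form.atom 2)) (d_or_assoc2 (Form.atom 0) (Form.atom 1) (Form.atom 2))
  · intro a b
    simpa [evalA] using key _ _ (fun n => if n = 0 then a else b) (d_absorb1a (Form.atom 0) (Form.atom 1)) (d_absorb1b (Form.atom 0) (Form.atom 1))
  · intro a b
    simpa [evalA] using key _ _ (fun n => if n = 0 then a else b) (d_absorb2a (Form.atom 0) (Form.atom 1)) (d_absorb2b (Form.atom 0) (Form.atom 1))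
  · intro a
    simpa [evalA] using key _ _ (fun _ => a) (d_orbot1 (Form.atom 0)) (d_orbot2 (Form.atom 0))
  · intro a
    have h := hcons [] _ (d_imprefl (Form.atom 0)) (fun _ => a) o (by simp)
    simp only [evalA] at h
    exact hantisymm _ _ (htop _) h
  · intro a b
    simpa [evalA] using key _ _ (fun n => if n = 0 then a else b) (d_mp1 (Form.atom 0) (Form.atom 1)) (d_mp2 (Form.atom 0) (Form.atom 1))
  · intro a b
    have := key _ _ (fun n => if n = 0 then a else b) (d_le1 (Form.atom 0) (Form.atom 1)) (d_le2 (Form.atom 0) (Form.atom 1))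
    simpa [evalA] using this
  · intro a b c
    simpa [evalA] using key _ _ (fun n => if n = 0 then a else if n = 1 then b else c)
      (d_dist1 (Form.atom 0) (Form.atom 1) (Form.atom 2)) (d_dist2 (Form.atom 0) (Form.atom 1) (Form.atom 2))
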